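/- For every θ ∈ [0, π/2), the tilted grim reaper function u(x, y) = −log(cos(x·cos θ))/cos²θ − y·tan θ, defined on the slab Ω = (−π/(2 cos θ), π/(2 cos θ)) × ℝ ⊆ ℝ², is a graphical translator with vertical velocity e₃: it satisfies ∑_{i=1}^{2} ∂_i( ∂_i u / √(1+|Du|²) ) = 1/√(1+|Du|²) on Ω. -/

import Mathlib

open scoped ENNReal
open MeasureTheory

noncomputable section

/-- `u : Ω → ℝ` is a graphical translator with velocity `T = (T', Tlast) ∈ ℝⁿ × ℝ`:
`∑ i ∂_i(∂_i u / √(1+|Du|²)) = (Tlast − ⟨Du, T'⟩)/√(1+|Du|²)` on `Ω`. -/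
def IsTranslator {n : ℕ} (Ω : Set (EuclideanSpace ℝ (Fin n)))
    (u : EuclideanSpace ℝ (Fin n) → ℝ)
    (T' : EuclideanSpace ℝ (Fin n)) (Tlast : ℝ) : Prop :=
  ∀ x ∈ Ω,
    (∑ i : Fin n, fderiv ℝ
      (fun y => gradient u y i / Real.sqrt (1 + ‖gradient u y‖ ^ 2)) x
      (EuclideanSpace.single i 1))
    = (Tlast - (inner ℝ (gradient u x) T' : ℝ)) / Real.sqrt (1 + ‖gradient u x‖ ^ 2)

/-- The tilted grim reaper `u(x,y) = −log(cos(x cos θ))/cos²θ − y tan θ`, defined on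
the slab `|x| < π/(2 cos θ)`, is a graphical translator with vertical velocity `e₃`. -/
theorem tilted_grim_reaper_is_vertical_translator
    (θ : ℝ) (hθ : θ ∈ Set.Ico 0 (Real.pi / 2)) :
    IsTranslator
      {x : EuclideanSpace ℝ (Fin 2) |
        -(Real.pi / (2 * Real.cos θ)) < x 0 ∧ x 0 < Real.pi / (2 * Real.cos θ)}
      (fun x => -Real.log (Real.cos (x 0 * Real.cos θ)) / Real.cos θ ^ 2 -
        x 1 * Real.tan θ)
      0 1 := by
  obtain ⟨hθ0, hθ1⟩ := hθ
  have ha : 0 < Real.cos θ := Real.cos_pos_of_mem_Ioo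
    ⟨by linarith [Real.pi_pos], hθ1⟩
  set a : ℝ := Real.cos θ with ha_def
  have ha' : a ≠ 0 := ne_of_gt ha
  set c : ℝ := Real.tan θ with hc_def
  set u : EuclideanSpace ℝ (Fin 2) → ℝ :=
    fun x => -Real.log (Real.cos (x 0 * a)) / a ^ 2 - x 1 * c with hu_def
  set p : ℝ → ℝ := fun t => Real.tan (t * a) / a with hp_def
  set S : ℝ → ℝ := fun t => 1 + ((p t) ^ 2 + ((-c) ^ 2 + 0)) with hS_def
  set g : EuclideanSpace ℝ (Fin 2) → EuclideanSpace ℝ (Fin 2) :=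
    fun y => EuclideanSpace.single 0 (p (y 0)) + EuclideanSpace.single 1 (-c)
    with hg_def
  have hg0 : ∀ y, g y 0 = p (y 0) := by
    intro y
    simp [hg_def, EuclideanSpace.single_apply]
  have hg1 : ∀ y, g y 1 = -c := by
    intro y
    simp [hg_def, EuclideanSpace.single_apply]
  have hnorm : ∀ y, ‖g y‖ ^ 2 = (p (y 0)) ^ 2 + ((-c) ^ 2 + 0) := by
    intro y
    rw [EuclideanSpace.norm_eq, Real.sq_sqrt (by positivity)]
    simp [Fin.sum_univ_two, hg0, hg1, sq_abs]
  have hSpos : ∀ t, 0 < S t := by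
    intro t
    simp only [hS_def]
    positivity
  -- projections
  have hproj0 : ∀ y : EuclideanSpace ℝ (Fin 2), HasFDerivAt (𝕜 := ℝ)
      (fun x : EuclideanSpace ℝ (Fin 2) => x 0)
      (EuclideanSpace.proj (0 : Fin 2)) y := by
    intro y
    simpa [PiLp.proj_apply] using (EuclideanSpace.proj (0 : Fin 2) :
      EuclideanSpace ℝ (Fin 2) →L[ℝ] ℝ).hasFDerivAt (x := y)
  have hproj1 : ∀ y : EuclideanSpace ℝ (Fin 2), HasFDerivAt (𝕜 := ℝ)
      (fun x : EuclideanSpace ℝ (Fin 2) => x 1)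
      (EuclideanSpace.proj (1 : Fin 2)) y := by
    intro y
    simpa [PiLp.proj_apply] using (EuclideanSpace.proj (1 : Fin 2) :
      EuclideanSpace ℝ (Fin 2) →L[ℝ] ℝ).hasFDerivAt (x := y)
  -- derivative of p
  have hp' : ∀ t : ℝ, Real.cos (t * a) ≠ 0 →
      HasDerivAt p (1 / Real.cos (t * a) ^ 2) t := by
    intro t ht
    have h1 : HasDerivAt (fun s : ℝ => s * a) a t := by
      simpa using (hasDerivAt_id t).mul_const a
    have h2 := (Real.hasDerivAt_tan ht).comp t h1
    have h3 := h2.div_const a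
    refine h3.congr_deriv ?_
    field_simp
  -- gradient of u
  have hG : ∀ y : EuclideanSpace ℝ (Fin 2), Real.cos (y 0 * a) ≠ 0 →
      HasGradientAt u (g y) y := by
    intro y hy
    have h1 : HasDerivAt (fun s : ℝ => s * a) a (y 0) := by
      simpa using (hasDerivAt_id (y 0)).mul_const a
    have hcos : HasDerivAt (fun s : ℝ => Real.cos (s * a))
        (-Real.sin (y 0 * a) * a) (y 0) := by
      refine ((Real.hasDerivAt_cos (y 0 * a)).comp (y 0) h1).congr_deriv ?_
      ring
    have hlog : HasDerivAt (fun s : ℝ => -Real.log (Real.cos (s * a)) / a ^ 2)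
        (p (y 0)) (y 0) := by
      have h2 := ((hcos.log hy).neg).div_const (a ^ 2)
      refine h2.congr_deriv ?_
      simp only [hp_def, Real.tan_eq_sin_div_cos]
      field_simp <;> ring
    have hfd1 : HasFDerivAt (fun x : EuclideanSpace ℝ (Fin 2) =>
        -Real.log (Real.cos (x 0 * a)) / a ^ 2)
        ((p (y 0)) • (EuclideanSpace.proj (0 : Fin 2) :
          EuclideanSpace ℝ (Fin 2) →L[ℝ] ℝ)) y :=
      by have := hlog.comp_hasFDerivAt y (hproj0 y); exact this
    have hfd2 : HasFDerivAt (fun x : EuclideanSpace ℝ (Fin 2) => x 1 * c)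
        (c • (EuclideanSpace.proj (1 : Fin 2) :
          EuclideanSpace ℝ (Fin 2) →L[ℝ] ℝ)) y :=
      (hproj1 y).mul_const c
    have hu' : HasFDerivAt u
        ((p (y 0)) • (EuclideanSpace.proj (0 : Fin 2) :
            EuclideanSpace ℝ (Fin 2) →L[ℝ] ℝ)
          - c • (EuclideanSpace.proj (1 : Fin 2) :
            EuclideanSpace ℝ (Fin 2) →L[ℝ] ℝ)) y :=
      hfd1.sub hfd2
    rw [hasGradientAt_iff_hasFDerivAt]
    refine hu'.congr_fderiv ?_
    refine ContinuousLinearMap.ext fun v => ?_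
    rw [InnerProductSpace.toDual_apply_apply, PiLp.inner_apply]
    simp [Fin.sum_univ_two, hg0, hg1, PiLp.proj_apply]
    ring
  -- main
  intro x hx
  obtain ⟨hx1, hx2⟩ := hx
  have hx2' : x 0 < (Real.pi / 2) / a := by
    rwa [div_mul_eq_div_div] at hx2
  have hx1' : (-(Real.pi / 2)) / a < x 0 := by
    rwa [div_mul_eq_div_div, ← neg_div] at hx1
  have hcosx : 0 < Real.cos (x 0 * a) := by
    apply Real.cos_pos_of_mem_Ioo
    exact ⟨(div_lt_iff₀ ha).mp hx1', (lt_div_iff₀ ha).mp hx2'⟩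
  -- gradient u = g near x
  have hopen : IsOpen {y : EuclideanSpace ℝ (Fin 2) | Real.cos (y 0 * a) ≠ 0} := by
    have hc0 : Continuous (fun y : EuclideanSpace ℝ (Fin 2) => (y 0 : ℝ)) := by
      simpa [PiLp.proj_apply] using (EuclideanSpace.proj (0 : Fin 2) :
        EuclideanSpace ℝ (Fin 2) →L[ℝ] ℝ).continuous
    exact isOpen_compl_singleton.preimage
      (Real.continuous_cos.comp (hc0.mul continuous_const))
  have hmem : ∀ᶠ y in nhds x, Real.cos (y 0 * a) ≠ 0 :=
    hopen.mem_nhds hcosx.ne'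
  have heq : (fun y => gradient u y) =ᶠ[nhds x] g := by
    filter_upwards [hmem] with y hy using (hG y hy).gradient
  have hgx : gradient u x = g x := (hG x hcosx.ne').gradient
  -- replace the fderiv arguments
  have hfderiv_eq : ∀ i : Fin 2,
      fderiv ℝ (fun y => gradient u y i / Real.sqrt (1 + ‖gradient u y‖ ^ 2)) x
      = fderiv ℝ (fun y => g y i / Real.sqrt (1 + ‖g y‖ ^ 2)) x := by
    intro i
    apply Filter.EventuallyEq.fderiv_eq
    filter_upwards [heq] with y hy
    rw [hy]
  -- one-variable derivatives
  set P := p (x 0) with hP_def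
  set P' := 1 / Real.cos (x 0 * a) ^ 2 with hP'_def
  have hpder : HasDerivAt p P' (x 0) := hp' (x 0) hcosx.ne'
  have hSder : HasDerivAt S (2 * P * P') (x 0) := by
    have h1 : HasDerivAt (fun t => (p t) ^ 2) (2 * P * P') (x 0) := by
      have := hpder.pow 2
      refine this.congr_deriv ?_
      simp [hP_def]
    have h2 := ((h1.add_const ((-c) ^ 2 + 0)).const_add 1)
    exact h2
  have hsne : Real.sqrt (S (x 0)) ≠ 0 := by
    positivity
  have hsder : HasDerivAt (fun t => Real.sqrt (S t))
      (1 / (2 * Real.sqrt (S (x 0))) * (2 * P * P')) (x 0) :=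
    (Real.hasDerivAt_sqrt (hSpos (x 0)).ne').comp (x 0) hSder
  set s := Real.sqrt (S (x 0)) with hs_def
  have hspos : 0 < s := Real.sqrt_pos.mpr (hSpos (x 0))
  have hs2 : s ^ 2 = S (x 0) := Real.sq_sqrt (hSpos (x 0)).le
  have hqder : HasDerivAt (fun t => p t / Real.sqrt (S t))
      ((P' * s - P * (1 / (2 * s) * (2 * P * P'))) / s ^ 2) (x 0) :=
    hpder.div hsder hsne
  have hrder : HasDerivAt (fun t => (-c) / Real.sqrt (S t))
      ((0 * s - (-c) * (1 / (2 * s) * (2 * P * P'))) / s ^ 2) (x 0) :=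
    (hasDerivAt_const (x 0) (-c)).div hsder hsne
  -- the two coordinate functions
  have hfun0 : (fun y : EuclideanSpace ℝ (Fin 2) =>
      g y 0 / Real.sqrt (1 + ‖g y‖ ^ 2)) = fun y => p (y 0) / Real.sqrt (S (y 0)) := by
    funext y
    rw [hg0, hnorm, hS_def]
  have hfun1 : (fun y : EuclideanSpace ℝ (Fin 2) =>
      g y 1 / Real.sqrt (1 + ‖g y‖ ^ 2)) = fun y => (-c) / Real.sqrt (S (y 0)) := by
    funext y
    rw [hg1, hnorm, hS_def]
  have hF0 : HasFDerivAt (fun y : EuclideanSpace ℝ (Fin 2) =>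
      g y 0 / Real.sqrt (1 + ‖g y‖ ^ 2))
      (((P' * s - P * (1 / (2 * s) * (2 * P * P'))) / s ^ 2) •
        (EuclideanSpace.proj (0 : Fin 2) : EuclideanSpace ℝ (Fin 2) →L[ℝ] ℝ)) x := by
    rw [hfun0]
    exact hqder.comp_hasFDerivAt x (hproj0 x)
  have hF1 : HasFDerivAt (fun y : EuclideanSpace ℝ (Fin 2) =>
      g y 1 / Real.sqrt (1 + ‖g y‖ ^ 2))
      (((0 * s - (-c) * (1 / (2 * s) * (2 * P * P'))) / s ^ 2) •
        (EuclideanSpace.proj (0 : Fin 2) : EuclideanSpace ℝ (Fin 2) →L[ℝ] ℝ)) x := by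
    rw [hfun1]
    have := hrder.comp_hasFDerivAt x (hproj0 x); exact this
  rw [Fin.sum_univ_two, hfderiv_eq 0, hfderiv_eq 1, hF0.fderiv, hF1.fderiv, hgx]
  have he00 : (EuclideanSpace.proj (0 : Fin 2) : EuclideanSpace ℝ (Fin 2) →L[ℝ] ℝ)
      (EuclideanSpace.single (0 : Fin 2) 1) = 1 := by
    simp [PiLp.proj_apply, EuclideanSpace.single_apply]
  have he01 : (EuclideanSpace.proj (0 : Fin 2) : EuclideanSpace ℝ (Fin 2) →L[ℝ] ℝ)
      (EuclideanSpace.single (1 : Fin 2) 1) = 0 := by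
    simp [PiLp.proj_apply, EuclideanSpace.single_apply]
  rw [ContinuousLinearMap.smul_apply, ContinuousLinearMap.smul_apply, he00, he01]
  have hinner : (inner ℝ (g x) (0 : EuclideanSpace ℝ (Fin 2)) : ℝ) = 0 :=
    inner_zero_right _
  rw [hinner, hnorm]
  -- final algebraic identity
  have key : P' * (1 + c ^ 2) = S (x 0) := by
    have h1 : (1 + c ^ 2) * a ^ 2 = 1 := by
      rw [ha_def, ← Real.inv_one_add_tan_sq (ne_of_gt ha : Real.cos θ ≠ 0), hc_def]
      exact mul_inv_cancel₀ (by positivity)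
    have h2 : (1 + Real.tan (x 0 * a) ^ 2) * Real.cos (x 0 * a) ^ 2 = 1 := by
      rw [← Real.inv_one_add_tan_sq hcosx.ne']
      exact mul_inv_cancel₀ (by positivity)
    have gen : ∀ A T a' c' : ℝ, A ≠ 0 → a' ≠ 0 →
        (1 + c' ^ 2) * a' ^ 2 = 1 → (1 + T ^ 2) * A ^ 2 = 1 →
        1 / A ^ 2 * (1 + c' ^ 2) = 1 + ((T / a') ^ 2 + ((-c') ^ 2 + 0)) := by
      intro A T a' c' hA ha0 h1 h2
      field_simp
      linear_combination (1 - A ^ 2) * h1 - h2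
    simp only [hS_def, hP'_def, hP_def]
    exact gen _ (Real.tan (x 0 * a)) a c hcosx.ne' ha' h1 h2
  have hSx : S (x 0) = 1 + (P ^ 2 + ((-c) ^ 2 + 0)) := rfl
  have key2 : P' * (1 + c ^ 2) = 1 + P ^ 2 + c ^ 2 := by
    rw [key, hSx]; ring
  have hs2' : s ^ 2 = 1 + P ^ 2 + c ^ 2 := by
    rw [hs2, hSx]; ring
  have expand' : ∀ s' P0 P0' c0 : ℝ, s' ≠ 0 →
      ((P0' * s' - P0 * (1 / (2 * s') * (2 * P0 * P0'))) / s' ^ 2) * 1 +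
      ((0 * s' - (-c0) * (1 / (2 * s') * (2 * P0 * P0'))) / s' ^ 2) * 0
      = (P0' * s' ^ 2 - P0 ^ 2 * P0') / s' ^ 3 := by
    intro s' P0 P0' c0 hs'
    field_simp
    ring
  have expand := expand' s P P' c hspos.ne' 
  rw [smul_eq_mul, smul_eq_mul, expand]
  have hR : Real.sqrt (1 + (p (x 0) ^ 2 + ((-c) ^ 2 + 0))) = s := rfl
  rw [hR, div_eq_div_iff (pow_pos hspos 3).ne' hspos.ne']
  linear_combination (s * P' - s) * hs2' + s * key2

end
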